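/- Let W be a real subspace of the skew-Hermitian N×N matrices that is invariant under conjugation by every φ(g) and whose complex span W_ℂ has no conjugation-invariant complex subspaces other than 0 and W_ℂ; let {u_1,…,u_w} be a Frobenius-orthonormal basis of W. Let H be a skew-Hermitian matrix with [H,X] ∈ W for every X ∈ W, let O be a Hermitian matrix with iO ∈ W, and let ρ be a density matrix. Then ∫_G ∫_G ( Tr(φ(g⁻) ρ φ(g⁻)⁻¹ · [H, φ(g⁺) O φ(g⁺)⁻¹]) )² dμ(g⁺) dμ(g⁻) = Tr(O²) · ( Σ_{j,k=1}^w (Tr([H,u_k] u_j))² ) · ( Σ_{j=1}^w (Tr((iρ) u_j))² ) / w². -/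

import Mathlib

open MeasureTheory Matrix
open scoped ComplexOrder

noncomputable section
set_option linter.unusedSectionVars false
namespace Stmt9Aux

variable {G : Type} [Group G] {N w : ℕ}

/-- Real Frobenius-type pairing used throughout. -/
def sip {N : ℕ} (x y : Matrix (Fin N) (Fin N) ℂ) : ℝ := (-(Matrix.trace (x * y))).re

/-- Conjugation action. -/
def cj (φ : G →* Matrix.unitaryGroup (Fin N) ℂ) (g : G) (x : Matrix (Fin N) (Fin N) ℂ) :
    Matrix (Fin N) (Fin N) ℂ :=
  (φ g : Matrix (Fin N) (Fin N) ℂ) * x * (φ g⁻¹ : Matrix (Fin N) (Fin N) ℂ)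

variable (φ : G →* Matrix.unitaryGroup (Fin N) ℂ)

lemma U_mul (a b : G) :
    (φ a : Matrix (Fin N) (Fin N) ℂ) * (φ b : Matrix (Fin N) (Fin N) ℂ)
      = (φ (a * b) : Matrix (Fin N) (Fin N) ℂ) := by
  have h : ((φ a * φ b : Matrix.unitaryGroup (Fin N) ℂ) : Matrix (Fin N) (Fin N) ℂ)
      = (φ a : Matrix (Fin N) (Fin N) ℂ) * (φ b : Matrix (Fin N) (Fin N) ℂ) := rfl
  rw [← h, ← _root_.map_mul]

lemma U_one : ((φ (1 : G)) : Matrix (Fin N) (Fin N) ℂ) = 1 := by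
  rw [_root_.map_one]; rfl

lemma cj_mul (a b : G) (x : Matrix (Fin N) (Fin N) ℂ) :
    cj φ a (cj φ b x) = cj φ (a * b) x := by
  unfold cj
  rw [← U_mul φ a b, show (a * b)⁻¹ = b⁻¹ * a⁻¹ from mul_inv_rev a b, ← U_mul φ b⁻¹ a⁻¹]
  simp only [mul_assoc]

lemma cj_one (x : Matrix (Fin N) (Fin N) ℂ) : cj φ 1 x = x := by
  simp [cj, U_one, inv_one]

lemma cj_cancel (g : G) (x : Matrix (Fin N) (Fin N) ℂ) : cj φ g⁻¹ (cj φ g x) = x := by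
  rw [cj_mul, inv_mul_cancel, cj_one]

lemma cj_cancel' (g : G) (x : Matrix (Fin N) (Fin N) ℂ) : cj φ g (cj φ g⁻¹ x) = x := by
  rw [cj_mul, mul_inv_cancel, cj_one]

lemma cj_mul_mat (g : G) (x y : Matrix (Fin N) (Fin N) ℂ) :
    cj φ g (x * y) = cj φ g x * cj φ g y := by
  have h : (φ g⁻¹ : Matrix (Fin N) (Fin N) ℂ) * (φ g : Matrix (Fin N) (Fin N) ℂ) = 1 := by
    rw [U_mul, inv_mul_cancel, U_one]
  unfold cj
  simp only [mul_assoc]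
  rw [show (φ g⁻¹ : Matrix (Fin N) (Fin N) ℂ) * ((φ g : Matrix (Fin N) (Fin N) ℂ) *
      (y * (φ g⁻¹ : Matrix (Fin N) (Fin N) ℂ))) = y * (φ g⁻¹ : Matrix (Fin N) (Fin N) ℂ) by
    rw [← mul_assoc, h, one_mul]]

lemma trace_cj (g : G) (x : Matrix (Fin N) (Fin N) ℂ) :
    Matrix.trace (cj φ g x) = Matrix.trace x := by
  have h : (φ g⁻¹ : Matrix (Fin N) (Fin N) ℂ) * (φ g : Matrix (Fin N) (Fin N) ℂ) = 1 := by
    rw [U_mul, inv_mul_cancel, U_one]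
  unfold cj
  rw [Matrix.trace_mul_comm, ← mul_assoc, h, one_mul]

lemma sip_symm (x y : Matrix (Fin N) (Fin N) ℂ) : sip x y = sip y x := by
  unfold sip; rw [Matrix.trace_mul_comm]

lemma sip_cj (g : G) (x y : Matrix (Fin N) (Fin N) ℂ) :
    sip (cj φ g x) (cj φ g y) = sip x y := by
  unfold sip
  rw [← cj_mul_mat, trace_cj]

lemma cj_smul (g : G) (a : ℂ) (x : Matrix (Fin N) (Fin N) ℂ) :
    cj φ g (a • x) = a • cj φ g x := by
  simp [cj, Matrix.mul_smul, Matrix.smul_mul]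

lemma cj_smul_real (g : G) (a : ℝ) (x : Matrix (Fin N) (Fin N) ℂ) :
    cj φ g (a • x) = a • cj φ g x := by
  simp [cj, Matrix.mul_smul, Matrix.smul_mul]

lemma cj_add (g : G) (x y : Matrix (Fin N) (Fin N) ℂ) :
    cj φ g (x + y) = cj φ g x + cj φ g y := by
  simp [cj, Matrix.mul_add, Matrix.add_mul]

lemma cj_sum {ι : Type*} (g : G) (s : Finset ι) (f : ι → Matrix (Fin N) (Fin N) ℂ) :
    cj φ g (∑ i ∈ s, f i) = ∑ i ∈ s, cj φ g (f i) := by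
  simp [cj, Matrix.mul_sum, Matrix.sum_mul]

lemma sip_smul_left (a : ℝ) (x y : Matrix (Fin N) (Fin N) ℂ) :
    sip (a • x) y = a * sip x y := by
  simp [sip, Matrix.smul_mul, Matrix.trace_smul, Complex.smul_re]

lemma sip_add_left (x x' y : Matrix (Fin N) (Fin N) ℂ) :
    sip (x + x') y = sip x y + sip x' y := by
  simp [sip, Matrix.add_mul, Matrix.trace_add]; ring

lemma sip_smul_right (a : ℝ) (x y : Matrix (Fin N) (Fin N) ℂ) :
    sip y (a • x) = a * sip y x := by
  simp [sip, Matrix.mul_smul, Matrix.trace_smul, Complex.smul_re]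

lemma sip_sum_right {ι : Type*} (s : Finset ι) (y : Matrix (Fin N) (Fin N) ℂ)
    (f : ι → Matrix (Fin N) (Fin N) ℂ) :
    sip y (∑ i ∈ s, f i) = ∑ i ∈ s, sip y (f i) := by
  simp [sip, Matrix.mul_sum, Matrix.trace_sum, Complex.re_sum]

lemma sip_sum_left {ι : Type*} (s : Finset ι) (y : Matrix (Fin N) (Fin N) ℂ)
    (f : ι → Matrix (Fin N) (Fin N) ℂ) :
    sip (∑ i ∈ s, f i) y = ∑ i ∈ s, sip (f i) y := by
  simp [sip, Matrix.sum_mul, Matrix.trace_sum, Complex.re_sum]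


variable (W : Submodule ℝ (Matrix (Fin N) (Fin N) ℂ))
variable (u : Fin w → Matrix (Fin N) (Fin N) ℂ)

lemma sip_u (huorth : ∀ j k, Matrix.trace (u j * u k) = if j = k then (-1 : ℂ) else 0)
    (j k : Fin w) : sip (u j) (u k) = if j = k then 1 else 0 := by
  simp [sip, huorth, apply_ite]

lemma expand_mem (huspan : Submodule.span ℝ (Set.range u) = W)
    (huorth : ∀ j k, Matrix.trace (u j * u k) = if j = k then (-1 : ℂ) else 0) :
    ∀ x ∈ W, ∑ k, sip x (u k) • u k = x := by
  rw [← huspan]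
  intro x hx
  induction hx using Submodule.span_induction with
  | mem x hx =>
    obtain ⟨j, rfl⟩ := hx
    simp [sip_u u huorth, ite_smul]
  | zero => simp [sip]
  | add x y hx hy ihx ihy =>
    simp only [sip_add_left, add_smul, Finset.sum_add_distrib, ihx, ihy]
  | smul a x hx ih =>
    simp only [sip_smul_left, mul_smul, ← Finset.smul_sum, ih]

lemma pair (huspan : Submodule.span ℝ (Set.range u) = W)
    (huorth : ∀ j k, Matrix.trace (u j * u k) = if j = k then (-1 : ℂ) else 0) :
    ∀ x ∈ W, ∀ y, sip y x = ∑ k, sip x (u k) * sip y (u k) := by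
  intro x hx y
  conv_lhs => rw [← expand_mem W u huspan huorth x hx]
  rw [sip_sum_right]
  exact Finset.sum_congr rfl fun k _ => sip_smul_right _ _ _

lemma norm_const (hWinv : ∀ g : G, ∀ X ∈ W,
      (φ g : Matrix (Fin N) (Fin N) ℂ) * X * (φ g⁻¹ : Matrix (Fin N) (Fin N) ℂ) ∈ W)
    (hu : ∀ j, u j ∈ W)
    (huspan : Submodule.span ℝ (Set.range u) = W)
    (huorth : ∀ j k, Matrix.trace (u j * u k) = if j = k then (-1 : ℂ) else 0)
    (v : Matrix (Fin N) (Fin N) ℂ) (g : G) :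
    ∑ k, (sip (cj φ g v) (u k)) ^ 2 = ∑ k, (sip v (u k)) ^ 2 := by
  have hWinv' : ∀ g : G, ∀ X ∈ W, cj φ g X ∈ W := fun g X hX => hWinv g X hX
  set p : Matrix (Fin N) (Fin N) ℂ := ∑ m, sip v (u m) • u m with hp_def
  have hp : p ∈ W := Submodule.sum_mem _ fun m _ => Submodule.smul_mem _ _ (hu m)
  have hpk : ∀ k, sip p (u k) = sip v (u k) := by
    intro k
    rw [hp_def, sip_sum_left]
    simp [sip_smul_left, sip_u u huorth, mul_ite]
  have hvx : ∀ x ∈ W, sip v x = sip p x := by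
    intro x hx
    rw [pair W u huspan huorth x hx v, pair W u huspan huorth x hx p]
    exact Finset.sum_congr rfl fun k _ => by rw [hpk]
  have hb : ∀ k, sip (cj φ g v) (u k) = sip (cj φ g p) (u k) := by
    intro k
    have h1 : sip (cj φ g v) (u k) = sip v (cj φ g⁻¹ (u k)) := by
      conv_lhs => rw [show u k = cj φ g (cj φ g⁻¹ (u k)) from (cj_cancel' φ g _).symm, sip_cj]
    have h2 : sip (cj φ g p) (u k) = sip p (cj φ g⁻¹ (u k)) := by
      conv_lhs => rw [show u k = cj φ g (cj φ g⁻¹ (u k)) from (cj_cancel' φ g _).symm, sip_cj]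
    rw [h1, h2, hvx _ (hWinv' g⁻¹ _ (hu k))]
  calc ∑ k, (sip (cj φ g v) (u k)) ^ 2 = ∑ k, (sip (cj φ g p) (u k)) ^ 2 := by
        exact Finset.sum_congr rfl fun k _ => by rw [hb]
    _ = sip (cj φ g p) (cj φ g p) := by
        rw [pair W u huspan huorth _ (hWinv' g _ hp) (cj φ g p)]
        exact Finset.sum_congr rfl fun k _ => (sq _)
    _ = sip p p := sip_cj φ g p p
    _ = ∑ k, (sip p (u k)) ^ 2 := by
        rw [pair W u huspan huorth _ hp p]
        exact Finset.sum_congr rfl fun k _ => (sq _).symm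
    _ = ∑ k, (sip v (u k)) ^ 2 := Finset.sum_congr rfl fun k _ => by rw [hpk]

section Cont
variable [TopologicalSpace G] [IsTopologicalGroup G] [CompactSpace G]
  [MeasurableSpace G] [BorelSpace G]

lemma cont_sip (hcont : Continuous fun g => (φ g : Matrix (Fin N) (Fin N) ℂ))
    (v x : Matrix (Fin N) (Fin N) ℂ) :
    Continuous fun g : G => sip (cj φ g v) x := by
  have hinv : Continuous fun g : G => (φ g⁻¹ : Matrix (Fin N) (Fin N) ℂ) :=
    hcont.comp continuous_inv
  have h1 : Continuous fun g : G => cj φ g v * x :=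
    ((hcont.matrix_mul continuous_const).matrix_mul hinv).matrix_mul continuous_const
  exact Complex.continuous_re.comp h1.matrix_trace.neg

lemma integrable_of_cont (μ : Measure G) [IsFiniteMeasureOnCompacts μ]
    {f : G → ℝ} (hf : Continuous f) : Integrable f μ :=
  hf.integrable_of_hasCompactSupport (isClosed_tsupport f).isCompact

end Cont


section Orth
variable [TopologicalSpace G] [IsTopologicalGroup G] [CompactSpace G]
  [MeasurableSpace G] [BorelSpace G]

lemma coe_real_smul (r : ℝ) (x : Matrix (Fin N) (Fin N) ℂ) : (r : ℂ) • x = r • x := by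
  rw [← Complex.coe_algebraMap, algebraMap_smul]

lemma orth (μ : Measure G) [μ.IsHaarMeasure] [IsProbabilityMeasure μ]
    (hw : 1 ≤ w)
    (hcont : Continuous fun g => (φ g : Matrix (Fin N) (Fin N) ℂ))
    (hWinv : ∀ g : G, ∀ X ∈ W,
      (φ g : Matrix (Fin N) (Fin N) ℂ) * X * (φ g⁻¹ : Matrix (Fin N) (Fin N) ℂ) ∈ W)
    (hWirr : ∀ W' : Submodule ℂ (Matrix (Fin N) (Fin N) ℂ),
      W' ≤ Submodule.span ℂ (W : Set (Matrix (Fin N) (Fin N) ℂ)) →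
      (∀ g : G, ∀ X ∈ W',
        (φ g : Matrix (Fin N) (Fin N) ℂ) * X * (φ g⁻¹ : Matrix (Fin N) (Fin N) ℂ) ∈ W') →
      W' = ⊥ ∨ W' = Submodule.span ℂ (W : Set (Matrix (Fin N) (Fin N) ℂ)))
    (hu : ∀ j, u j ∈ W)
    (huspan : Submodule.span ℝ (Set.range u) = W)
    (huorth : ∀ j k, Matrix.trace (u j * u k) = if j = k then (-1 : ℂ) else 0)
    (v : Matrix (Fin N) (Fin N) ℂ) (k k' : Fin w) :
    ∫ g, sip (cj φ g v) (u k) * sip (cj φ g v) (u k') ∂μ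
      = if k = k' then (∑ j, (sip v (u j)) ^ 2) / w else 0 := by
  have hWinv' : ∀ g : G, ∀ X ∈ W, cj φ g X ∈ W := fun g X hX => hWinv g X hX
  have intA : ∀ a b : Fin w,
      Integrable (fun g => sip (cj φ g v) (u a) * sip (cj φ g v) (u b)) μ := fun a b =>
    integrable_of_cont μ ((cont_sip φ hcont v (u a)).mul (cont_sip φ hcont v (u b)))
  let M : Fin w → Fin w → ℝ := fun a b =>
    ∫ g, sip (cj φ g v) (u a) * sip (cj φ g v) (u b) ∂μ
  have hM : ∀ a b, M a b = ∫ g, sip (cj φ g v) (u a) * sip (cj φ g v) (u b) ∂μ :=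
    fun a b => rfl
  -- the commutation relation coming from invariance of the Haar measure
  have keycom : ∀ (h : G) (j m : Fin w),
      ∑ x, M j x * sip (cj φ h (u m)) (u x) = ∑ x, sip (cj φ h (u x)) (u j) * M x m := by
    intro h j m
    have hcross : ∀ g : G, sip (cj φ g v) (cj φ h (u m)) = sip (cj φ (h⁻¹ * g) v) (u m) := by
      intro g
      conv_lhs => rw [← sip_cj φ h⁻¹, cj_mul, cj_cancel]
    have hcross2 : ∀ g : G, sip (cj φ g v) (cj φ h⁻¹ (u j)) = sip (cj φ (h * g) v) (u j) := by
      intro g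
      conv_lhs => rw [← sip_cj φ h, cj_mul, cj_cancel']
    have hRflip : ∀ x, sip (cj φ h (u x)) (u j) = sip (cj φ h⁻¹ (u j)) (u x) := by
      intro x
      rw [← sip_cj φ h⁻¹ (cj φ h (u x)) (u j), cj_cancel, sip_symm]
    have lhs_eq : ∑ x, M j x * sip (cj φ h (u m)) (u x)
        = ∫ g, sip (cj φ (h * g) v) (u j) * sip (cj φ g v) (u m) ∂μ := by
      calc ∑ x, M j x * sip (cj φ h (u m)) (u x)
          = ∑ x, ∫ g, sip (cj φ g v) (u j) * sip (cj φ g v) (u x)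
              * sip (cj φ h (u m)) (u x) ∂μ := by
            exact Finset.sum_congr rfl fun x _ => (integral_mul_const _ _).symm
        _ = ∫ g, ∑ x, sip (cj φ g v) (u j) * sip (cj φ g v) (u x)
              * sip (cj φ h (u m)) (u x) ∂μ :=
            (integral_finset_sum _ fun x _ => (intA j x).mul_const _).symm
        _ = ∫ g, sip (cj φ g v) (u j) * sip (cj φ (h⁻¹ * g) v) (u m) ∂μ := by
            refine integral_congr_ae (Filter.Eventually.of_forall fun g => ?_)
            dsimp only
            rw [← hcross g, pair W u huspan huorth _ (hWinv' h _ (hu m)) (cj φ g v),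
              Finset.mul_sum]
            exact Finset.sum_congr rfl fun x _ => by ring
        _ = ∫ g, sip (cj φ (h * g) v) (u j) * sip (cj φ g v) (u m) ∂μ := by
            rw [← integral_mul_left_eq_self
              (μ := μ) (fun g => sip (cj φ g v) (u j) * sip (cj φ (h⁻¹ * g) v) (u m)) h]
            refine integral_congr_ae (Filter.Eventually.of_forall fun g => ?_)
            dsimp only
            rw [inv_mul_cancel_left]
    have rhs_eq : ∑ x, sip (cj φ h (u x)) (u j) * M x m
        = ∫ g, sip (cj φ (h * g) v) (u j) * sip (cj φ g v) (u m) ∂μ := by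
      calc ∑ x, sip (cj φ h (u x)) (u j) * M x m
          = ∑ x, ∫ g, sip (cj φ h⁻¹ (u j)) (u x)
              * (sip (cj φ g v) (u x) * sip (cj φ g v) (u m)) ∂μ := by
            refine Finset.sum_congr rfl fun x _ => ?_
            rw [hRflip, hM]
            exact (integral_const_mul _ _).symm
        _ = ∫ g, ∑ x, sip (cj φ h⁻¹ (u j)) (u x)
              * (sip (cj φ g v) (u x) * sip (cj φ g v) (u m)) ∂μ :=
            (integral_finset_sum _ fun x _ => (intA x m).const_mul _).symm
        _ = ∫ g, sip (cj φ (h * g) v) (u j) * sip (cj φ g v) (u m) ∂μ := by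
            refine integral_congr_ae (Filter.Eventually.of_forall fun g => ?_)
            dsimp only
            rw [← hcross2 g, pair W u huspan huorth _ (hWinv' h⁻¹ _ (hu j)) (cj φ g v),
              Finset.sum_mul]
            exact Finset.sum_congr rfl fun x _ => by ring
    rw [lhs_eq, rhs_eq]
  -- the averaged operator, as a complex-linear endomorphism
  let T0 : Matrix (Fin N) (Fin N) ℂ →ₗ[ℂ] Matrix (Fin N) (Fin N) ℂ :=
    ∑ j : Fin w, ∑ x : Fin w, (-(M j x) : ℂ) •
      (LinearMap.smulRight
        ((Matrix.traceLinearMap (Fin N) ℂ ℂ).comp (LinearMap.mulLeft ℂ (u x))) (u j))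
  have hT0_apply : ∀ y, T0 y
      = ∑ j, ∑ x, ((-(M j x) : ℂ) * Matrix.trace (u x * y)) • u j := by
    intro y
    simp [T0, LinearMap.sum_apply, LinearMap.smul_apply, LinearMap.smulRight_apply,
      LinearMap.comp_apply, LinearMap.mulLeft_apply, Matrix.traceLinearMap, smul_smul]
  have hT0_u : ∀ m, T0 (u m) = ∑ j, (M j m : ℝ) • u j := by
    intro m
    rw [hT0_apply]
    refine Finset.sum_congr rfl fun j _ => ?_
    rw [Finset.sum_eq_single m (fun x _ hx => by simp [huorth, hx]) (by simp)]
    rw [huorth, if_pos rfl]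
    rw [show (-(M j m) : ℂ) * (-1) = ((M j m : ℝ) : ℂ) by ring, coe_real_smul]
  have hT0_mem : ∀ y, T0 y ∈ Submodule.span ℂ (W : Set (Matrix (Fin N) (Fin N) ℂ)) := by
    intro y
    rw [hT0_apply]
    exact Submodule.sum_mem _ fun j _ => Submodule.sum_mem _ fun x _ =>
      Submodule.smul_mem _ _ (Submodule.subset_span (hu j))
  have hWcinv : ∀ g : G, ∀ y ∈ Submodule.span ℂ (W : Set (Matrix (Fin N) (Fin N) ℂ)),
      cj φ g y ∈ Submodule.span ℂ (W : Set (Matrix (Fin N) (Fin N) ℂ)) := by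
    intro g y hy
    induction hy using Submodule.span_induction with
    | mem y hy => exact Submodule.subset_span (hWinv' g y hy)
    | zero =>
      have : cj φ g 0 = 0 := by simp [cj]
      rw [this]; exact Submodule.zero_mem _
    | add y z hy hz ihy ihz => rw [cj_add]; exact Submodule.add_mem _ ihy ihz
    | smul a y hy ih => rw [cj_smul]; exact Submodule.smul_mem _ _ ih
  -- equivariance of T0 on basis vectors
  have hequi_u : ∀ (h : G) (m : Fin w), T0 (cj φ h (u m)) = cj φ h (T0 (u m)) := by
    intro h m
    have hmem : cj φ h (u m) ∈ W := hWinv' h _ (hu m)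
    have L1 : T0 (cj φ h (u m))
        = ∑ j, (∑ x, M j x * sip (cj φ h (u m)) (u x)) • u j := by
      conv_lhs => rw [← expand_mem W u huspan huorth _ hmem, map_sum]
      simp_rw [LinearMap.map_smul_of_tower, hT0_u, Finset.smul_sum, smul_smul]
      rw [Finset.sum_comm]
      refine Finset.sum_congr rfl fun j _ => ?_
      rw [← Finset.sum_smul]
      congr 1
      exact Finset.sum_congr rfl fun x _ => mul_comm _ _
    have R1 : cj φ h (T0 (u m))
        = ∑ j, (∑ x, sip (cj φ h (u x)) (u j) * M x m) • u j := by
      rw [hT0_u, cj_sum]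
      calc ∑ x, cj φ h ((M x m : ℝ) • u x)
          = ∑ x, (M x m : ℝ) • cj φ h (u x) := by
            exact Finset.sum_congr rfl fun x _ => cj_smul_real φ h _ _
        _ = ∑ x, (M x m : ℝ) • ∑ j, sip (cj φ h (u x)) (u j) • u j := by
            refine Finset.sum_congr rfl fun x _ => ?_
            rw [expand_mem W u huspan huorth _ (hWinv' h _ (hu x))]
        _ = ∑ x, ∑ j, (M x m * sip (cj φ h (u x)) (u j)) • u j := by
            refine Finset.sum_congr rfl fun x _ => ?_
            rw [Finset.smul_sum]
            exact Finset.sum_congr rfl fun j _ => smul_smul _ _ _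
        _ = ∑ j, (∑ x, sip (cj φ h (u x)) (u j) * M x m) • u j := by
            rw [Finset.sum_comm]
            refine Finset.sum_congr rfl fun j _ => ?_
            rw [← Finset.sum_smul]
            congr 1
            exact Finset.sum_congr rfl fun x _ => mul_comm _ _
    rw [L1, R1]
    exact Finset.sum_congr rfl fun j _ => by rw [keycom h j m]
  -- equivariance on the complex span
  have hequi : ∀ (h : G), ∀ y ∈ Submodule.span ℂ (W : Set (Matrix (Fin N) (Fin N) ℂ)),
      T0 (cj φ h y) = cj φ h (T0 y) := by
    intro h y hy
    induction hy using Submodule.span_induction with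
    | mem y hy =>
      have hyW : y ∈ W := hy
      conv_lhs => rw [← expand_mem W u huspan huorth y hyW]
      conv_rhs => rw [← expand_mem W u huspan huorth y hyW]
      rw [cj_sum, map_sum, map_sum, cj_sum]
      refine Finset.sum_congr rfl fun x _ => ?_
      rw [cj_smul_real, LinearMap.map_smul_of_tower, LinearMap.map_smul_of_tower,
        cj_smul_real, hequi_u]
    | zero =>
      have : cj φ h (0 : Matrix (Fin N) (Fin N) ℂ) = 0 := by simp [cj]
      rw [this, map_zero, this]
    | add y z hy hz ihy ihz => rw [cj_add, map_add, ihy, ihz, map_add, cj_add]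
    | smul a y hy ih => rw [cj_smul, _root_.map_smul, ih, _root_.map_smul, cj_smul]
  -- Schur's lemma
  let Wc := Submodule.span ℂ (W : Set (Matrix (Fin N) (Fin N) ℂ))
  let T1 : Wc →ₗ[ℂ] Wc := T0.restrict (p := Wc) (q := Wc) fun y _ => hT0_mem y
  have hT1coe : ∀ z : Wc, (T1 z : Matrix (Fin N) (Fin N) ℂ) = T0 (z : Matrix (Fin N) (Fin N) ℂ) :=
    fun z => rfl
  have hi0 : (0 : ℕ) < w := hw
  let i0 : Fin w := ⟨0, hi0⟩
  have hu0 : u i0 ≠ 0 := by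
    intro hcon
    have := huorth i0 i0
    rw [hcon] at this
    simp at this
  have : Nontrivial Wc := by
    refine nontrivial_of_ne ⟨u i0, Submodule.subset_span (hu i0)⟩ 0 ?_
    intro hcon
    exact hu0 (by simpa using congrArg Subtype.val hcon)
  obtain ⟨c, hc⟩ := Module.End.exists_eigenvalue (T1 : Module.End ℂ Wc)
  let W' : Submodule ℂ (Matrix (Fin N) (Fin N) ℂ) :=
    Submodule.map Wc.subtype (Module.End.eigenspace T1 c)
  have hW'le : W' ≤ Wc := by
    rintro y ⟨z, hz, rfl⟩
    exact z.2
  have hW'inv : ∀ g : G, ∀ y ∈ W', cj φ g y ∈ W' := by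
    rintro g y ⟨z, hz, rfl⟩
    refine ⟨⟨cj φ g ↑z, hWcinv g _ z.2⟩, ?_, rfl⟩
    have hz2 : T1 z = c • z := Module.End.mem_eigenspace_iff.mp hz
    have hz' : T0 (z : Matrix (Fin N) (Fin N) ℂ) = c • (z : Matrix (Fin N) (Fin N) ℂ) :=
      congrArg Subtype.val hz2
    refine Module.End.mem_eigenspace_iff.mpr (Subtype.ext ?_)
    show T0 (cj φ g ↑z) = c • cj φ g (z : Matrix (Fin N) (Fin N) ℂ)
    rw [hequi g _ z.2, hz', cj_smul]
  have hW'ne : W' ≠ ⊥ := by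
    obtain ⟨vec, hvec⟩ := hc.exists_hasEigenvector
    intro hbot
    have hmem : (vec : Matrix (Fin N) (Fin N) ℂ) ∈ W' := ⟨vec, hvec.1, rfl⟩
    rw [hbot, Submodule.mem_bot] at hmem
    exact hvec.2 (Subtype.ext hmem)
  have hW'top : W' = Wc :=
    ((hWirr W' hW'le fun g X hX => hW'inv g X hX).resolve_left hW'ne)
  have hT0eig : ∀ m, T0 (u m) = c • u m := by
    intro m
    have hmem : u m ∈ W' := by
      rw [hW'top]
      exact Submodule.subset_span (hu m)
    obtain ⟨z, hz, hzeq⟩ := hmem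
    have hz2 : T1 z = c • z := Module.End.mem_eigenspace_iff.mp hz
    have hz' : T0 (z : Matrix (Fin N) (Fin N) ℂ) = c • (z : Matrix (Fin N) (Fin N) ℂ) :=
      congrArg Subtype.val hz2
    rw [← hzeq]
    exact hz'
  -- identify the entries of M
  have hMent : ∀ q m : Fin w, ((M q m : ℝ) : ℂ) = if q = m then c else 0 := by
    intro q m
    have h1 := congrArg (fun X => Matrix.trace (X * u q)) (hT0eig m)
    rw [hT0_u] at h1
    have hlhs : Matrix.trace ((∑ j, (M j m : ℝ) • u j) * u q) = -((M q m : ℝ) : ℂ) := by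
      rw [Matrix.sum_mul, Matrix.trace_sum]
      rw [Finset.sum_eq_single q
        (fun x _ hx => by rw [Matrix.smul_mul, Matrix.trace_smul, huorth, if_neg hx]; simp)
        (by simp)]
      rw [Matrix.smul_mul, Matrix.trace_smul, huorth, if_pos rfl]
      rw [Complex.real_smul]
      ring
    have hrhs : Matrix.trace ((c • u m) * u q) = c * (if m = q then (-1 : ℂ) else 0) := by
      rw [Matrix.smul_mul, Matrix.trace_smul, huorth, smul_eq_mul]
    rw [hlhs, hrhs] at h1
    by_cases hqm : q = m
    · subst hqm
      rw [if_pos rfl]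
      rw [if_pos rfl] at h1
      linear_combination -h1
    · rw [if_neg hqm]
      rw [if_neg (fun hmq => hqm hmq.symm)] at h1
      linear_combination -h1
  have hcval : c = ((M i0 i0 : ℝ) : ℂ) := by
    have := hMent i0 i0
    rw [if_pos rfl] at this
    exact this.symm
  have hMdiag : ∀ q, M q q = M i0 i0 := by
    intro q
    have h1 := hMent q q
    rw [if_pos rfl, hcval] at h1
    exact_mod_cast h1
  have hMoff : ∀ q m, q ≠ m → M q m = 0 := by
    intro q m hqm
    have h1 := hMent q m
    rw [if_neg hqm] at h1
    exact_mod_cast h1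
  -- value on the diagonal via the trace
  have htr : ∑ q, M q q = ∑ j, (sip v (u j)) ^ 2 := by
    calc ∑ q, M q q
        = ∫ g, ∑ q, sip (cj φ g v) (u q) * sip (cj φ g v) (u q) ∂μ :=
          (integral_finset_sum _ fun q _ => intA q q).symm
      _ = ∫ _g, (∑ j, (sip v (u j)) ^ 2 : ℝ) ∂μ := by
          refine integral_congr_ae (Filter.Eventually.of_forall fun g => ?_)
          simp_rw [← sq]
          exact norm_const φ W u hWinv hu huspan huorth v g
      _ = ∑ j, (sip v (u j)) ^ 2 := by simp
  have hwne : (w : ℝ) ≠ 0 := by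
    have h0 : (0 : ℝ) < w := by exact_mod_cast hw
    exact h0.ne'
  have hdiagval : M i0 i0 = (∑ j, (sip v (u j)) ^ 2) / w := by
    rw [eq_div_iff hwne]
    have hsum : ∑ q : Fin w, M q q = (w : ℝ) * M i0 i0 := by
      rw [Finset.sum_congr rfl fun q _ => hMdiag q]
      simp [Finset.sum_const, Finset.card_univ, nsmul_eq_mul]
    rw [← htr, hsum]
    ring
  show M k k' = _
  by_cases hkk : k = k'
  · subst hkk
    rw [if_pos rfl, hMdiag k, hdiagval]
  · rw [if_neg hkk]
    exact hMoff k k' hkk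

end Orth

end Stmt9Aux
end


open Stmt9Aux

/-- variance on a single irreducible component. Let `W` be a
conjugation-invariant real subspace of the skew-Hermitian matrices with irreducible
complex span, spanned by the Frobenius-orthonormal family `{u_j}`. For skew-Hermitian `H`
with `[H, W] ⊆ W`, Hermitian `O` with `iO ∈ W`, and a density matrix `ρ`:
`∫∫ (Tr(φ(g⁻)ρφ(g⁻)⁻¹ [H, φ(g⁺)Oφ(g⁺)⁻¹]))² dμ dμ
  = Tr(O²)·(∑_{j,k} Tr([H,u_k]u_j)²)·(∑_j Tr((iρ)u_j)²)/w²`. -/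
theorem stmt_9
    {G : Type} [Group G] [TopologicalSpace G] [IsTopologicalGroup G] [CompactSpace G]
    [MeasurableSpace G] [BorelSpace G]
    (μ : Measure G) [μ.IsHaarMeasure] [IsProbabilityMeasure μ]
    {N w : ℕ} (hN : 1 ≤ N) (hw : 1 ≤ w)
    (φ : G →* Matrix.unitaryGroup (Fin N) ℂ)
    (hcont : Continuous fun g => (φ g : Matrix (Fin N) (Fin N) ℂ))
    (W : Submodule ℝ (Matrix (Fin N) (Fin N) ℂ))
    (hWskew : ∀ X ∈ W, Xᴴ = -X)
    (hWinv : ∀ g : G, ∀ X ∈ W,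
      (φ g : Matrix (Fin N) (Fin N) ℂ) * X * (φ g⁻¹ : Matrix (Fin N) (Fin N) ℂ) ∈ W)
    (hWirr : ∀ W' : Submodule ℂ (Matrix (Fin N) (Fin N) ℂ),
      W' ≤ Submodule.span ℂ (W : Set (Matrix (Fin N) (Fin N) ℂ)) →
      (∀ g : G, ∀ X ∈ W',
        (φ g : Matrix (Fin N) (Fin N) ℂ) * X * (φ g⁻¹ : Matrix (Fin N) (Fin N) ℂ) ∈ W') →
      W' = ⊥ ∨ W' = Submodule.span ℂ (W : Set (Matrix (Fin N) (Fin N) ℂ)))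
    (u : Fin w → Matrix (Fin N) (Fin N) ℂ) (hu : ∀ j, u j ∈ W)
    (huspan : Submodule.span ℝ (Set.range u) = W)
    (huorth : ∀ j k, Matrix.trace (u j * u k) = if j = k then (-1 : ℂ) else 0)
    (H : Matrix (Fin N) (Fin N) ℂ) (hHskew : Hᴴ = -H)
    (hHW : ∀ X ∈ W, ⁅H, X⁆ ∈ W)
    (O : Matrix (Fin N) (Fin N) ℂ) (hO : Oᴴ = O) (hiO : Complex.I • O ∈ W)
    (ρ : Matrix (Fin N) (Fin N) ℂ) (hρ : ρ.PosSemidef) (hρtr : ρ.trace = 1) :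
    (∫ gm, ∫ gp,
        ((Matrix.trace ((φ gm : Matrix (Fin N) (Fin N) ℂ) * ρ *
            (φ gm⁻¹ : Matrix (Fin N) (Fin N) ℂ) *
          ⁅H, (φ gp : Matrix (Fin N) (Fin N) ℂ) * O *
            (φ gp⁻¹ : Matrix (Fin N) (Fin N) ℂ)⁆)).re) ^ 2 ∂μ ∂μ)
      = (Matrix.trace (O * O)).re *
          (∑ j, ∑ k, ((Matrix.trace (⁅H, u k⁆ * u j)).re) ^ 2) *
          (∑ j, ((Matrix.trace ((Complex.I • ρ) * u j)).re) ^ 2) / (w : ℝ) ^ 2 := by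
  classical
  have hWinv' : ∀ g : G, ∀ X ∈ W, cj φ g X ∈ W := fun g X hX => hWinv g X hX
  set v1 : Matrix (Fin N) (Fin N) ℂ := Complex.I • ρ with hv1
  set v2 : Matrix (Fin N) (Fin N) ℂ := Complex.I • O with hv2
  have horth : ∀ (v : Matrix (Fin N) (Fin N) ℂ) (a b : Fin w),
      (∫ g, sip (cj φ g v) (u a) * sip (cj φ g v) (u b) ∂μ)
        = if a = b then (∑ j, (sip v (u j)) ^ 2) / w else 0 :=
    fun v a b => orth φ W u μ hw hcont hWinv hWirr hu huspan huorth v a b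
  have intAv : ∀ (v : Matrix (Fin N) (Fin N) ℂ) (a b : Fin w),
      Integrable (fun g => sip (cj φ g v) (u a) * sip (cj φ g v) (u b)) μ := fun v a b =>
    integrable_of_cont μ ((cont_sip φ hcont v (u a)).mul (cont_sip φ hcont v (u b)))
  set Sc : ℝ := ∑ j, (sip v2 (u j)) ^ 2 with hScdef
  set Sa : ℝ := ∑ j, (sip v1 (u j)) ^ 2 with hSadef
  -- pointwise identification of the integrand
  have key : ∀ gm gp : G,
      (Matrix.trace ((φ gm : Matrix (Fin N) (Fin N) ℂ) * ρ *
            (φ gm⁻¹ : Matrix (Fin N) (Fin N) ℂ) *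
          ⁅H, (φ gp : Matrix (Fin N) (Fin N) ℂ) * O *
            (φ gp⁻¹ : Matrix (Fin N) (Fin N) ℂ)⁆)).re
      = ∑ x, (∑ j, sip (cj φ gp v2) (u j) * sip ⁅H, u j⁆ (u x)) * sip (cj φ gm v1) (u x) := by
    intro gm gp
    have hv2g : cj φ gp v2 ∈ W := hWinv' gp v2 hiO
    have hYW : ⁅H, cj φ gp v2⁆ ∈ W := hHW _ hv2g
    have e2 : cj φ gp v2 = Complex.I •
        ((φ gp : Matrix (Fin N) (Fin N) ℂ) * O * (φ gp⁻¹ : Matrix (Fin N) (Fin N) ℂ)) := by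
      rw [hv2]; simp [cj, Matrix.mul_smul, Matrix.smul_mul]
    have e1 : cj φ gm v1 = Complex.I •
        ((φ gm : Matrix (Fin N) (Fin N) ℂ) * ρ * (φ gm⁻¹ : Matrix (Fin N) (Fin N) ℂ)) := by
      rw [hv1]; simp [cj, Matrix.mul_smul, Matrix.smul_mul]
    have ebr : ⁅H, Complex.I •
          ((φ gp : Matrix (Fin N) (Fin N) ℂ) * O * (φ gp⁻¹ : Matrix (Fin N) (Fin N) ℂ))⁆
        = Complex.I • ⁅H, (φ gp : Matrix (Fin N) (Fin N) ℂ) * O *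
            (φ gp⁻¹ : Matrix (Fin N) (Fin N) ℂ)⁆ := by
      simp [Ring.lie_def, Matrix.mul_smul, Matrix.smul_mul, smul_sub]
    have hmain : (cj φ gm v1) * ⁅H, cj φ gp v2⁆
        = -(((φ gm : Matrix (Fin N) (Fin N) ℂ) * ρ * (φ gm⁻¹ : Matrix (Fin N) (Fin N) ℂ)) *
            ⁅H, (φ gp : Matrix (Fin N) (Fin N) ℂ) * O *
              (φ gp⁻¹ : Matrix (Fin N) (Fin N) ℂ)⁆) := by
      rw [e1, e2, ebr, smul_mul_smul_comm, Complex.I_mul_I, neg_smul, one_smul]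
    have hre : (Matrix.trace ((φ gm : Matrix (Fin N) (Fin N) ℂ) * ρ *
            (φ gm⁻¹ : Matrix (Fin N) (Fin N) ℂ) *
          ⁅H, (φ gp : Matrix (Fin N) (Fin N) ℂ) * O *
            (φ gp⁻¹ : Matrix (Fin N) (Fin N) ℂ)⁆)).re
        = sip (cj φ gm v1) ⁅H, cj φ gp v2⁆ := by
      show _ = (-(Matrix.trace ((cj φ gm v1) * ⁅H, cj φ gp v2⁆))).re
      rw [hmain, Matrix.trace_neg, neg_neg]
    rw [hre, pair W u huspan huorth _ hYW (cj φ gm v1)]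
    refine Finset.sum_congr rfl fun x _ => ?_
    congr 1
    conv_lhs => rw [← expand_mem W u huspan huorth _ hv2g]
    rw [show ⁅H, ∑ j, sip (cj φ gp v2) (u j) • u j⁆
        = ∑ j, sip (cj φ gp v2) (u j) • ⁅H, u j⁆ by
      simp [Ring.lie_def, Matrix.mul_sum, Matrix.sum_mul, Matrix.mul_smul, Matrix.smul_mul,
        smul_sub, Finset.sum_sub_distrib]]
    rw [sip_sum_left]
    exact Finset.sum_congr rfl fun j _ => sip_smul_left _ _ _
  -- the inner integral
  have inner : ∀ gm : G,
      (∫ gp, (∑ x, (∑ j, sip (cj φ gp v2) (u j) * sip ⁅H, u j⁆ (u x))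
          * sip (cj φ gm v1) (u x)) ^ 2 ∂μ)
      = (Sc / w) * ∑ j, (∑ x, sip ⁅H, u j⁆ (u x) * sip (cj φ gm v1) (u x)) ^ 2 := by
    intro gm
    have hre : ∀ gp : G, (∑ x, (∑ j, sip (cj φ gp v2) (u j) * sip ⁅H, u j⁆ (u x))
          * sip (cj φ gm v1) (u x)) ^ 2
        = ∑ j, ∑ j', (sip (cj φ gp v2) (u j) * sip (cj φ gp v2) (u j')) *
            ((∑ x, sip ⁅H, u j⁆ (u x) * sip (cj φ gm v1) (u x)) *
             (∑ x, sip ⁅H, u j'⁆ (u x) * sip (cj φ gm v1) (u x))) := by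
      intro gp
      have h1 : (∑ x, (∑ j, sip (cj φ gp v2) (u j) * sip ⁅H, u j⁆ (u x))
            * sip (cj φ gm v1) (u x))
          = ∑ j, sip (cj φ gp v2) (u j)
              * (∑ x, sip ⁅H, u j⁆ (u x) * sip (cj φ gm v1) (u x)) := by
        simp only [Finset.sum_mul]
        rw [Finset.sum_comm]
        simp only [Finset.mul_sum]
        exact Finset.sum_congr rfl fun j _ => Finset.sum_congr rfl fun x _ => by ring
      rw [h1, sq, Finset.sum_mul_sum]
      exact Finset.sum_congr rfl fun j _ => Finset.sum_congr rfl fun j' _ => by ring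
    calc (∫ gp, (∑ x, (∑ j, sip (cj φ gp v2) (u j) * sip ⁅H, u j⁆ (u x))
            * sip (cj φ gm v1) (u x)) ^ 2 ∂μ)
        = ∫ gp, ∑ j, ∑ j', (sip (cj φ gp v2) (u j) * sip (cj φ gp v2) (u j')) *
            ((∑ x, sip ⁅H, u j⁆ (u x) * sip (cj φ gm v1) (u x)) *
             (∑ x, sip ⁅H, u j'⁆ (u x) * sip (cj φ gm v1) (u x))) ∂μ :=
          integral_congr_ae (Filter.Eventually.of_forall fun gp => hre gp)
      _ = ∑ j, ∑ j', (∫ gp, sip (cj φ gp v2) (u j) * sip (cj φ gp v2) (u j') ∂μ) *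
            ((∑ x, sip ⁅H, u j⁆ (u x) * sip (cj φ gm v1) (u x)) *
             (∑ x, sip ⁅H, u j'⁆ (u x) * sip (cj φ gm v1) (u x))) := by
          rw [integral_finset_sum _ (fun j _ =>
            integrable_finset_sum _ (fun j' _ => (intAv v2 j j').mul_const _))]
          refine Finset.sum_congr rfl fun j _ => ?_
          rw [integral_finset_sum _ (fun j' _ => (intAv v2 j j').mul_const _)]
          exact Finset.sum_congr rfl fun j' _ => integral_mul_const _ _
      _ = ∑ j, ∑ j', (if j = j' then Sc / w else 0) *
            ((∑ x, sip ⁅H, u j⁆ (u x) * sip (cj φ gm v1) (u x)) *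
             (∑ x, sip ⁅H, u j'⁆ (u x) * sip (cj φ gm v1) (u x))) := by
          refine Finset.sum_congr rfl fun j _ => Finset.sum_congr rfl fun j' _ => ?_
          rw [horth v2 j j']
      _ = (Sc / w) * ∑ j, (∑ x, sip ⁅H, u j⁆ (u x) * sip (cj φ gm v1) (u x)) ^ 2 := by
          rw [Finset.mul_sum]
          refine Finset.sum_congr rfl fun j _ => ?_
          rw [Finset.sum_eq_single j
            (fun j' _ hj' => by rw [if_neg (fun h => hj' h.symm), zero_mul]) (by simp)]
          rw [if_pos rfl, sq]
      _ = _ := rfl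
  -- the outer integral
  have houter : (∫ gm, (Sc / w) *
        ∑ j, (∑ x, sip ⁅H, u j⁆ (u x) * sip (cj φ gm v1) (u x)) ^ 2 ∂μ)
      = (Sc / w) * ∑ j, ∑ x, (sip ⁅H, u j⁆ (u x)) ^ 2 * (Sa / w) := by
    rw [integral_const_mul]
    congr 1
    have hre : ∀ gm : G, ∑ j, (∑ x, sip ⁅H, u j⁆ (u x) * sip (cj φ gm v1) (u x)) ^ 2
        = ∑ j, ∑ x, ∑ x', (sip ⁅H, u j⁆ (u x) * sip ⁅H, u j⁆ (u x')) *
            (sip (cj φ gm v1) (u x) * sip (cj φ gm v1) (u x')) := by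
      intro gm
      refine Finset.sum_congr rfl fun j _ => ?_
      rw [sq, Finset.sum_mul_sum]
      exact Finset.sum_congr rfl fun x _ => Finset.sum_congr rfl fun x' _ => by ring
    calc (∫ gm, ∑ j, (∑ x, sip ⁅H, u j⁆ (u x) * sip (cj φ gm v1) (u x)) ^ 2 ∂μ)
        = ∫ gm, ∑ j, ∑ x, ∑ x', (sip ⁅H, u j⁆ (u x) * sip ⁅H, u j⁆ (u x')) *
            (sip (cj φ gm v1) (u x) * sip (cj φ gm v1) (u x')) ∂μ :=
          integral_congr_ae (Filter.Eventually.of_forall fun gm => hre gm)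
      _ = ∑ j, ∑ x, ∑ x', (sip ⁅H, u j⁆ (u x) * sip ⁅H, u j⁆ (u x')) *
            (∫ gm, sip (cj φ gm v1) (u x) * sip (cj φ gm v1) (u x') ∂μ) := by
          rw [integral_finset_sum _ (fun j _ => integrable_finset_sum _ (fun x _ =>
            integrable_finset_sum _ (fun x' _ => (intAv v1 x x').const_mul _)))]
          refine Finset.sum_congr rfl fun j _ => ?_
          rw [integral_finset_sum _ (fun x _ =>
            integrable_finset_sum _ (fun x' _ => (intAv v1 x x').const_mul _))]
          refine Finset.sum_congr rfl fun x _ => ?_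
          rw [integral_finset_sum _ (fun x' _ => (intAv v1 x x').const_mul _)]
          exact Finset.sum_congr rfl fun x' _ => integral_const_mul _ _
      _ = ∑ j, ∑ x, ∑ x', (sip ⁅H, u j⁆ (u x) * sip ⁅H, u j⁆ (u x')) *
            (if x = x' then Sa / w else 0) := by
          refine Finset.sum_congr rfl fun j _ => Finset.sum_congr rfl fun x _ =>
            Finset.sum_congr rfl fun x' _ => ?_
          rw [horth v1 x x']
      _ = ∑ j, ∑ x, (sip ⁅H, u j⁆ (u x)) ^ 2 * (Sa / w) := by
          refine Finset.sum_congr rfl fun j _ => Finset.sum_congr rfl fun x _ => ?_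
          rw [Finset.sum_eq_single x
            (fun x' _ hx' => by rw [if_neg (fun h => hx' h.symm), mul_zero]) (by simp)]
          rw [if_pos rfl, sq]
  -- putting everything together
  calc (∫ gm, ∫ gp,
        ((Matrix.trace ((φ gm : Matrix (Fin N) (Fin N) ℂ) * ρ *
            (φ gm⁻¹ : Matrix (Fin N) (Fin N) ℂ) *
          ⁅H, (φ gp : Matrix (Fin N) (Fin N) ℂ) * O *
            (φ gp⁻¹ : Matrix (Fin N) (Fin N) ℂ)⁆)).re) ^ 2 ∂μ ∂μ)
      = ∫ gm, ∫ gp, (∑ x, (∑ j, sip (cj φ gp v2) (u j) * sip ⁅H, u j⁆ (u x))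
          * sip (cj φ gm v1) (u x)) ^ 2 ∂μ ∂μ := by
        refine integral_congr_ae (Filter.Eventually.of_forall fun gm => ?_)
        refine integral_congr_ae (Filter.Eventually.of_forall fun gp => ?_)
        dsimp only
        rw [key gm gp]
    _ = ∫ gm, (Sc / w) * ∑ j, (∑ x, sip ⁅H, u j⁆ (u x) * sip (cj φ gm v1) (u x)) ^ 2 ∂μ :=
        integral_congr_ae (Filter.Eventually.of_forall fun gm => inner gm)
    _ = (Sc / w) * ∑ j, ∑ x, (sip ⁅H, u j⁆ (u x)) ^ 2 * (Sa / w) := houter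
    _ = (Matrix.trace (O * O)).re *
          (∑ j, ∑ k, ((Matrix.trace (⁅H, u k⁆ * u j)).re) ^ 2) *
          (∑ j, ((Matrix.trace (v1 * u j)).re) ^ 2) / (w : ℝ) ^ 2 := by
        have hSc : Sc = (Matrix.trace (O * O)).re := by
          rw [hScdef]
          have h1 : sip v2 v2 = ∑ j, (sip v2 (u j)) ^ 2 := by
            rw [pair W u huspan huorth _ hiO v2]
            exact Finset.sum_congr rfl fun j _ => (sq _).symm
          rw [← h1]
          show (-(Matrix.trace (v2 * v2))).re = _
          rw [hv2, smul_mul_smul_comm, Complex.I_mul_I, neg_smul, one_smul,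
            Matrix.trace_neg, neg_neg]
        have hSa : Sa = ∑ j, ((Matrix.trace (v1 * u j)).re) ^ 2 := by
          rw [hSadef]
          refine Finset.sum_congr rfl fun j _ => ?_
          show ((-(Matrix.trace (v1 * u j))).re) ^ 2 = _
          rw [Complex.neg_re, neg_sq]
        have hL : ∑ j, ∑ x, (sip ⁅H, u j⁆ (u x)) ^ 2
            = ∑ j, ∑ k, ((Matrix.trace (⁅H, u k⁆ * u j)).re) ^ 2 := by
          rw [Finset.sum_comm]
          refine Finset.sum_congr rfl fun x _ => Finset.sum_congr rfl fun j _ => ?_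
          show ((-(Matrix.trace (⁅H, u j⁆ * u x))).re) ^ 2 = _
          rw [Complex.neg_re, neg_sq]
        have hexpand : ∑ j, ∑ x, (sip ⁅H, u j⁆ (u x)) ^ 2 * (Sa / w)
            = (∑ j, ∑ x, (sip ⁅H, u j⁆ (u x)) ^ 2) * (Sa / w) := by
          rw [Finset.sum_mul]
          exact Finset.sum_congr rfl fun j _ => (Finset.sum_mul _ _ _).symm
        rw [hexpand, hL, hSc, hSa]
        have hwne : (w : ℝ) ≠ 0 := by
          have h0 : (0 : ℝ) < w := by exact_mod_cast hw
          exact h0.ne'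
        field_simp
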